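/- The function φ(x,y) = (1/4)[x² + (y - x + x³)²][x² + (y - x + x³)² - 2] is non-increasing along trajectories of the system ẋ = y, ẏ = -(4x² - 1)y - x + x³ - x⁵: its derivative along the flow is -r²(1 - r²)²cos²θ ≤ 0 where r² = x² + (y - x + x³)² and r cos θ = x. -/

import Mathlib

/-- φ(x,y) = (1/4)[x² + (y-x+x³)²][x² + (y-x+x³)² - 2] is non-increasing along
trajectories of ẋ = y, ẏ = -(4x²-1)y - x + x³ - x⁵: its orbital derivative is
-r²(1-r²)²cos²θ = -x²(1-r²)² ≤ 0, where r² = x² + (y-x+x³)² and r cos θ = x. -/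
theorem lyapunov_nonincreasing_lienard
    (φ : ℝ → ℝ → ℝ)
    (hφ : ∀ x y, φ x y =
      (1/4) * (x^2 + (y - x + x^3)^2) * (x^2 + (y - x + x^3)^2 - 2)) :
    ∀ x y : ℝ,
      deriv (fun s => φ s y) x * y
        + deriv (fun s => φ x s) y * (-(4*x^2 - 1) * y - x + x^3 - x^5)
        = -(x^2 * (1 - (x^2 + (y - x + x^3)^2))^2) ∧
      -(x^2 * (1 - (x^2 + (y - x + x^3)^2))^2) ≤ 0 := by
  intro x y
  constructor
  · -- derivative of u(s) = s² + (y - s + s³)² at x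
    have hu : HasDerivAt (fun s : ℝ => s^2 + (y - s + s^3)^2)
        (2*x + 2*(y - x + x^3)*(-1 + 3*x^2)) x := by
      have h2 : HasDerivAt (fun s : ℝ => y - s + s^3) (-1 + 3*x^2) x := by
        have := ((hasDerivAt_const x y).sub (hasDerivAt_id x)).add (hasDerivAt_pow 3 x)
        exact this.congr_deriv (by push_cast; ring)
      have := (hasDerivAt_pow 2 x).add (h2.pow 2)
      exact this.congr_deriv (by push_cast; ring)
    -- derivative of v(s) = x² + (s - x + x³)² at y
    have hv : HasDerivAt (fun s : ℝ => x^2 + (s - x + x^3)^2)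
        (2*(y - x + x^3)) y := by
      have h2 : HasDerivAt (fun s : ℝ => s - x + x^3) 1 y := by
        exact (((hasDerivAt_id y).sub (hasDerivAt_const y x)).add
          (hasDerivAt_const y (x^3))).congr_deriv (by ring)
      have := (hasDerivAt_const y (x^2)).add (h2.pow 2)
      exact this.congr_deriv (by push_cast; ring)
    have hF : HasDerivAt (fun s => φ s y)
        ((1/4) * (2*x + 2*(y - x + x^3)*(-1 + 3*x^2)) * (x^2 + (y - x + x^3)^2 - 2)
          + (1/4) * (x^2 + (y - x + x^3)^2) * (2*x + 2*(y - x + x^3)*(-1 + 3*x^2))) x := by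
      have heq : (fun s => φ s y)
          = fun s => (1/4) * (s^2 + (y - s + s^3)^2) * (s^2 + (y - s + s^3)^2 - 2) :=
        funext fun s => hφ s y
      rw [heq]
      have := (((hasDerivAt_const x (1/4:ℝ)).mul hu).mul (hu.sub_const 2))
      exact this.congr_deriv (by simp only [Pi.mul_apply]; ring)
    have hG : HasDerivAt (fun s => φ x s)
        ((1/4) * (2*(y - x + x^3)) * (x^2 + (y - x + x^3)^2 - 2)
          + (1/4) * (x^2 + (y - x + x^3)^2) * (2*(y - x + x^3))) y := by
      have heq : (fun s => φ x s)
          = fun s => (1/4) * (x^2 + (s - x + x^3)^2) * (x^2 + (s - x + x^3)^2 - 2) :=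
        funext fun s => hφ x s
      rw [heq]
      have := (((hasDerivAt_const y (1/4:ℝ)).mul hv).mul (hv.sub_const 2))
      exact this.congr_deriv (by simp only [Pi.mul_apply]; ring)
    rw [hF.deriv, hG.deriv]
    ring
  · have h := mul_nonneg (sq_nonneg x) (sq_nonneg (1 - (x^2 + (y - x + x^3)^2)))
    linarith
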